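/- Let x₁,...,x_n be nonnegative reals and L_k = x₁ + ⋯ + x_k. If a processor is chosen greedily as the least loaded among m processors when assigning each item in order, then just after item i is assigned, the load of its processor is at most L_{i-1}/m + x_i ≤ (2 - 1/m)·max(L_i/m, x_i). -/

import Mathlib

/-- Load of machine `j` just before item `i` is assigned. -/
def loadBefore {n m : ℕ} (x : Fin n → ℝ) (a : Fin n → Fin m) (i : Fin n) (j : Fin m) : ℝ :=
  ∑ k ∈ Finset.univ.filter (fun k : Fin n => k < i ∧ a k = j), x k

/-- Total size of the first `i` items. -/
def prefixLoad {n : ℕ} (x : Fin n → ℝ) (i : ℕ) : ℝ :=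
  ∑ k ∈ Finset.univ.filter (fun k : Fin n => (k : ℕ) < i), x k

lemma sum_loadBefore {n m : ℕ} (x : Fin n → ℝ) (a : Fin n → Fin m) (i : Fin n) :
    ∑ j, loadBefore x a i j = prefixLoad x i := by
  unfold loadBefore prefixLoad
  rw [← Finset.sum_fiberwise (Finset.univ.filter fun k : Fin n => (k : ℕ) < i) a x]
  refine Finset.sum_congr rfl fun j _ => ?_
  rw [Finset.filter_filter]
  apply Finset.sum_congr _ (fun _ _ => rfl)
  apply Finset.filter_congr
  intro k _
  rw [Fin.lt_def]

theorem greedy_load_bound (n m : ℕ) (hm : 1 ≤ m) (x : Fin n → ℝ)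
    (hx : ∀ k, 0 ≤ x k) (a : Fin n → Fin m)
    (hgreedy : ∀ i j, loadBefore x a i (a i) ≤ loadBefore x a i j) :
    ∀ i : Fin n,
      loadBefore x a i (a i) + x i ≤ prefixLoad x i / m + x i ∧
      prefixLoad x i / m + x i ≤
        (2 - 1 / m) * max (prefixLoad x (i + 1) / m) (x i) := by
  intro i
  have hm0 : (0:ℝ) < m := by exact_mod_cast hm
  constructor
  · have h1 : (m : ℝ) * loadBefore x a i (a i) ≤ prefixLoad x i := by
      rw [← sum_loadBefore x a i]
      calc (m : ℝ) * loadBefore x a i (a i)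
          = ∑ _j : Fin m, loadBefore x a i (a i) := by
            simp [Finset.sum_const, nsmul_eq_mul]
        _ ≤ ∑ j, loadBefore x a i j := Finset.sum_le_sum fun j _ => hgreedy i j
    have : loadBefore x a i (a i) ≤ prefixLoad x i / m := by
      rw [le_div_iff₀ hm0]; linarith [h1]
    linarith
  · have hsucc : prefixLoad x (i + 1) = prefixLoad x i + x i := by
      unfold prefixLoad
      have : (Finset.univ.filter fun k : Fin n => (k : ℕ) < i + 1) =
          insert i (Finset.univ.filter fun k : Fin n => (k : ℕ) < i) := by
        ext k
        simp [Nat.lt_succ_iff_lt_or_eq, Fin.ext_iff, or_comm]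
        rw [Fin.le_iff_val_le_val, Fin.lt_def]; omega
      rw [this, Finset.sum_insert (by simp), add_comm]
    set M := max (prefixLoad x (i + 1) / m) (x i) with hM
    have h1 : prefixLoad x (i + 1) / m ≤ M := le_max_left _ _
    have h2 : x i ≤ M := le_max_right _ _
    have hcoef : (0:ℝ) ≤ 1 - 1 / m := by
      have : 1 / (m:ℝ) ≤ 1 := by
        rw [div_le_one hm0]; exact_mod_cast hm
      linarith
    have key : prefixLoad x i / m + x i = prefixLoad x (i+1) / m + (1 - 1/m) * x i := by
      rw [hsucc]; field_simp; ring
    rw [key]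
    have : (1 - 1/(m:ℝ)) * x i ≤ (1 - 1/m) * M := by
      exact mul_le_mul_of_nonneg_left h2 hcoef
    nlinarith [h1, this]
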